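/- Let n₁ ≥ 1 and K = 0, and let (λ₁,…,λ_{n₁}, μ₁,…,μ_{n₁}) be a real-analytic solution of the system (ODE) on an open interval I such that all the λᵢ coincide: λ₁ = λ₂ = ⋯ = λ_{n₁} on I. Then τ ≡ 0 on I (equivalently, all λᵢ vanish identically). -/

import Mathlib

/-- Lemma (all λᵢ equal): a real-analytic solution of the ODE system with `K = 0`
in which all the `λᵢ` coincide must have `τ ≡ 0`. -/
theorem stmt_6 (n₁ : ℕ) (hn : 1 ≤ n₁) (K : ℝ) (hK : K = 0)
    (I : Set ℝ) (hI : IsOpen I) (hIconn : I.OrdConnected)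
    (lam mu : Fin n₁ → ℝ → ℝ)
    (hlam : ∀ i, AnalyticOnNhd ℝ (lam i) I)
    (hmu : ∀ i, AnalyticOnNhd ℝ (mu i) I)
    (tau : ℝ → ℝ) (htau : ∀ t, tau t = (2/3) * ∑ i, lam i t)
    (hode1 : ∀ i, ∀ t ∈ I, HasDerivAt (lam i) ((tau t / 2 + lam i t) * mu i t) t)
    (hode2 : ∀ i, ∀ t ∈ I,
      HasDerivAt (mu i) ((mu i t) ^ 2 - tau t / 2 * lam i t + K) t)
    (hode3 : ∀ t ∈ I,
      -(deriv (deriv tau) t) + deriv tau t * (∑ i, mu i t)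
        + tau t * ((tau t) ^ 2 / 4 - ((n₁ : ℝ) + 1) * K + ∑ i, (lam i t) ^ 2) = 0)
    (hall : ∀ i j : Fin n₁, ∀ t ∈ I, lam i t = lam j t) :
    ∀ t ∈ I, tau t = 0 := by
  subst hK
  have hN : (1:ℝ) ≤ (n₁:ℝ) := by exact_mod_cast hn
  have hN0 : (0:ℝ) < (n₁:ℝ) := lt_of_lt_of_le one_pos hN
  have i₀ : Fin n₁ := ⟨0, hn⟩
  -- sums of equal terms
  have hsumlam : ∀ t ∈ I, ∑ i, lam i t = (n₁:ℝ) * lam i₀ t := by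
    intro t ht
    rw [Finset.sum_congr rfl (fun i _ => hall i i₀ t ht), Finset.sum_const,
      Finset.card_univ, Fintype.card_fin, nsmul_eq_mul]
  have htau2 : ∀ t ∈ I, tau t = 2*(n₁:ℝ)/3 * lam i₀ t := by
    intro t ht; rw [htau t, hsumlam t ht]; ring
  have htauD : ∀ t ∈ I, HasDerivAt tau (2/3 * ∑ i, (tau t/2 + lam i t) * mu i t) t := by
    intro t ht
    exact ((HasDerivAt.fun_sum (fun i _ => hode1 i t ht)).const_mul (2/3)).congr_of_eventuallyEq
      (Filter.Eventually.of_forall htau)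
  set U : Set ℝ := {t | t ∈ I ∧ tau t ≠ 0} with hUdef
  have hUmem : ∀ t ∈ U, U ∈ nhds t := by
    intro t ht
    have hc : ContinuousAt tau t := (htauD t ht.1).continuousAt
    filter_upwards [hI.mem_nhds ht.1, hc.eventually_ne ht.2] with s h1 h2
    exact ⟨h1, h2⟩
  have hlamne : ∀ t ∈ U, lam i₀ t ≠ 0 := by
    intro t ht h0
    exact ht.2 (by rw [htau2 t ht.1, h0, mul_zero])
  have hmueq : ∀ i, ∀ t ∈ U, mu i t = mu i₀ t := by
    intro i t ht
    have htI := ht.1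
    have hev : lam i₀ =ᶠ[nhds t] lam i :=
      Filter.eventually_of_mem (hI.mem_nhds htI) (fun s hs => (hall i i₀ s hs).symm)
    have huniq := ((hode1 i t htI).congr_of_eventuallyEq hev).unique (hode1 i₀ t htI)
    rw [hall i i₀ t htI] at huniq
    have hPne : tau t/2 + lam i₀ t ≠ 0 := by
      rw [htau2 t htI]
      intro h
      have h9 : ((n₁:ℝ) + 3) * lam i₀ t = 0 := by linear_combination 3 * h
      have hl0 : lam i₀ t = 0 := by
        rcases mul_eq_zero.mp h9 with h' | h'
        · nlinarith
        · exact h'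
      exact hlamne t ht hl0
    exact mul_left_cancel₀ hPne huniq
  have hsummu : ∀ t ∈ U, ∑ i, mu i t = (n₁:ℝ) * mu i₀ t := by
    intro t ht
    rw [Finset.sum_congr rfl (fun i _ => hmueq i t ht), Finset.sum_const,
      Finset.card_univ, Fintype.card_fin, nsmul_eq_mul]
  have hsumlam2 : ∀ t ∈ I, ∑ i, (lam i t)^2 = (n₁:ℝ) * (lam i₀ t)^2 := by
    intro t ht
    rw [Finset.sum_congr rfl (fun i _ => by rw [hall i i₀ t ht]), Finset.sum_const,
      Finset.card_univ, Fintype.card_fin, nsmul_eq_mul]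
  have hτd : ∀ t ∈ U, HasDerivAt tau (2*(n₁:ℝ)/3 * ((tau t/2 + lam i₀ t) * mu i₀ t)) t := by
    intro t ht
    have h := htauD t ht.1
    have hs : ∑ i, (tau t/2 + lam i t) * mu i t
        = (n₁:ℝ) * ((tau t/2 + lam i₀ t) * mu i₀ t) := by
      rw [Finset.sum_congr rfl (fun i _ => by rw [hall i i₀ t ht.1, hmueq i t ht]),
        Finset.sum_const, Finset.card_univ, Fintype.card_fin, nsmul_eq_mul]
    rw [hs] at h
    convert h using 1
    ring
  have hdtau : ∀ t ∈ U, deriv tau t = 2*(n₁:ℝ)/3 * ((tau t/2 + lam i₀ t) * mu i₀ t) :=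
    fun t ht => (hτd t ht).deriv
  -- the key pointwise identity on U
  have heq1 : ∀ t ∈ U,
      (2*(n₁:ℝ)^2-18)*(mu i₀ t)^2 + (2*(n₁:ℝ)^2+12*(n₁:ℝ))*(lam i₀ t)^2 = 0 := by
    intro t ht
    have htI := ht.1
    have hF : HasDerivAt (fun s => 2*(n₁:ℝ)/3 * ((tau s/2 + lam i₀ s) * mu i₀ s))
        (2*(n₁:ℝ)/3 * (((2*(n₁:ℝ)/3 * ((tau t/2 + lam i₀ t) * mu i₀ t))/2
            + (tau t/2 + lam i₀ t) * mu i₀ t) * mu i₀ t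
          + (tau t/2 + lam i₀ t) * ((mu i₀ t)^2 - tau t/2 * lam i₀ t + 0))) t :=
      ((((hτd t ht).div_const 2).add (hode1 i₀ t htI)).mul (hode2 i₀ t htI)).const_mul
        (2*(n₁:ℝ)/3)
    have hevF : deriv tau =ᶠ[nhds t] fun s => 2*(n₁:ℝ)/3 * ((tau s/2 + lam i₀ s) * mu i₀ s) :=
      Filter.eventually_of_mem (hUmem t ht) (fun s hs => hdtau s hs)
    have hdd := hevF.deriv_eq.trans hF.deriv
    have h3 := hode3 t htI
    rw [hdd, hdtau t ht, hsummu t ht, hsumlam2 t htI, htau2 t htI] at h3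
    have h4 : (2*(n₁:ℝ)*lam i₀ t)
        * ((2*(n₁:ℝ)^2-18)*(mu i₀ t)^2 + (2*(n₁:ℝ)^2+12*(n₁:ℝ))*(lam i₀ t)^2) = 0 := by
      linear_combination 27 * h3
    rcases mul_eq_zero.mp h4 with h' | h'
    · exact absurd h' (mul_ne_zero (ne_of_gt (by nlinarith)) (hlamne t ht))
    · exact h'
  -- now the main argument
  intro t₀ ht₀
  by_contra hτ0
  have htU : t₀ ∈ U := ⟨ht₀, hτ0⟩
  have hfD : HasDerivAt
      (fun s => (2*(n₁:ℝ)^2-18)*(mu i₀ s)^2 + (2*(n₁:ℝ)^2+12*(n₁:ℝ))*(lam i₀ s)^2)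
      ((2*(n₁:ℝ)^2-18) * (2*mu i₀ t₀*((mu i₀ t₀)^2 - tau t₀/2*lam i₀ t₀ + 0))
        + (2*(n₁:ℝ)^2+12*(n₁:ℝ)) * (2*lam i₀ t₀*((tau t₀/2 + lam i₀ t₀)*mu i₀ t₀))) t₀ := by
    have h1 := ((hode2 i₀ t₀ ht₀).fun_pow 2).const_mul (2*(n₁:ℝ)^2-18)
    have h2 := ((hode1 i₀ t₀ ht₀).fun_pow 2).const_mul (2*(n₁:ℝ)^2+12*(n₁:ℝ))
    refine (h1.fun_add h2).congr_deriv ?_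
    push_cast
    ring
  have hev0 : (fun s => (2*(n₁:ℝ)^2-18)*(mu i₀ s)^2 + (2*(n₁:ℝ)^2+12*(n₁:ℝ))*(lam i₀ s)^2)
      =ᶠ[nhds t₀] (fun _ => (0:ℝ)) :=
    Filter.eventually_of_mem (hUmem t₀ htU) (fun s hs => heq1 s hs)
  have hd1 : deriv (fun s => (2*(n₁:ℝ)^2-18)*(mu i₀ s)^2
      + (2*(n₁:ℝ)^2+12*(n₁:ℝ))*(lam i₀ s)^2) t₀ = 0 := by
    rw [hev0.deriv_eq]; simp
  have hD0 : (2*(n₁:ℝ)^2-18) * (2*mu i₀ t₀*((mu i₀ t₀)^2 - tau t₀/2*lam i₀ t₀ + 0))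
      + (2*(n₁:ℝ)^2+12*(n₁:ℝ)) * (2*lam i₀ t₀*((tau t₀/2 + lam i₀ t₀)*mu i₀ t₀)) = 0 := by
    rw [← hfD.deriv]; exact hd1
  rw [htau2 t₀ ht₀] at hD0
  have he1 := heq1 t₀ htU
  have key : mu i₀ t₀ * (lam i₀ t₀)^2 * (8*(n₁:ℝ)^2+12*(n₁:ℝ)) = 0 := by
    linear_combination hD0 - 2 * mu i₀ t₀ * he1
  have hl := hlamne t₀ htU
  have hm : mu i₀ t₀ = 0 := by
    rcases mul_eq_zero.mp key with h' | h'
    · rcases mul_eq_zero.mp h' with h'' | h''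
      · exact h''
      · exact absurd h'' (pow_ne_zero 2 hl)
    · nlinarith
  rw [hm] at he1
  have hl2 : 0 < (lam i₀ t₀)^2 := pow_two_pos_of_ne_zero hl
  nlinarith [he1, hl2, hN, mul_pos (show (0:ℝ) < 2*(n₁:ℝ)^2+12*(n₁:ℝ) by nlinarith) hl2]
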